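/- Let b ≤ 0 and s > 0. The function t ↦ ∫_0^s ψ_{s+t}(y) dy is differentiable on (0, ∞) with derivative d/dt ∫_0^s ψ_{s+t}(y) dy = −e^{−b²(s+t)/2} · √s / (π(s+t)√t) for every t > 0. -/

import Mathlib

open MeasureTheory

/-- The standard normal cumulative distribution function `Φ`. -/
noncomputable def Phi (y : ℝ) : ℝ :=
  ∫ z in Set.Iic y, Real.exp (-z ^ 2 / 2) / Real.sqrt (2 * Real.pi)

lemma gauss_integrable :
    Integrable (fun z : ℝ => Real.exp (-z ^ 2 / 2) / Real.sqrt (2 * Real.pi)) := by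
  have h : Integrable (fun z : ℝ => Real.exp (-(1/2) * z ^ 2)) :=
    integrable_exp_neg_mul_sq (by norm_num)
  have := h.div_const (Real.sqrt (2 * Real.pi))
  convert this using 2 with z
  ring_nf

lemma gauss_continuous :
    Continuous (fun z : ℝ => Real.exp (-z ^ 2 / 2) / Real.sqrt (2 * Real.pi)) := by
  continuity

lemma gauss_total : ∫ z : ℝ, Real.exp (-z ^ 2 / 2) / Real.sqrt (2 * Real.pi) = 1 := by
  have h : ∫ z : ℝ, Real.exp (-(1/2) * z ^ 2) = Real.sqrt (Real.pi / (1/2)) :=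
    integral_gaussian (1/2)
  have h2 : ∫ z : ℝ, Real.exp (-z ^ 2 / 2) = Real.sqrt (2 * Real.pi) := by
    rw [show (2 * Real.pi) = Real.pi / (1/2) by ring, ← h]
    congr 1 with z; ring_nf
  rw [integral_div, h2, div_self (by positivity)]

lemma hasDerivAt_Phi (y : ℝ) :
    HasDerivAt Phi (Real.exp (-y ^ 2 / 2) / Real.sqrt (2 * Real.pi)) y := by
  have hfun : Phi = fun y => (∫ z in Set.Iic (0:ℝ), Real.exp (-z ^ 2 / 2) / Real.sqrt (2 * Real.pi))
      + ∫ z in (0:ℝ)..y, Real.exp (-z ^ 2 / 2) / Real.sqrt (2 * Real.pi) := by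
    funext y
    rw [← intervalIntegral.integral_Iic_sub_Iic gauss_integrable.integrableOn
      gauss_integrable.integrableOn]
    simp [Phi]
  rw [hfun]
  have : HasDerivAt (fun y => ∫ z in (0:ℝ)..y, Real.exp (-z ^ 2 / 2) / Real.sqrt (2 * Real.pi))
      (Real.exp (-y ^ 2 / 2) / Real.sqrt (2 * Real.pi)) y :=
    intervalIntegral.integral_hasDerivAt_right gauss_integrable.intervalIntegrable
      gauss_continuous.aestronglyMeasurable.stronglyMeasurableAtFilter
      gauss_continuous.continuousAt
  exact this.const_add _

lemma Phi_nonneg (y : ℝ) : 0 ≤ Phi y :=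
  setIntegral_nonneg measurableSet_Iic (fun z _ => by positivity)

lemma Phi_le_one (y : ℝ) : Phi y ≤ 1 := by
  rw [← gauss_total]
  exact setIntegral_le_integral gauss_integrable (Filter.Eventually.of_forall fun z => by positivity)

lemma Phi_continuous : Continuous Phi :=
  continuous_iff_continuousAt.mpr fun y => (hasDerivAt_Phi y).continuousAt

lemma sqrtInv_integrableOn {s : ℝ} (hs : 0 < s) :
    IntegrableOn (fun y : ℝ => 1 / Real.sqrt y) (Set.Ioc 0 s) := by
  have h : IntervalIntegrable (fun x : ℝ => x ^ (-(1/2) : ℝ)) volume 0 s :=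
    intervalIntegral.intervalIntegrable_rpow' (by norm_num)
  rw [intervalIntegrable_iff_integrableOn_Ioc_of_le hs.le] at h
  refine h.congr_fun (fun y hy => ?_) measurableSet_Ioc
  simp [Real.rpow_neg hy.1.le, Real.sqrt_eq_rpow]

lemma integrableOn_of_sqrt_bound {f : ℝ → ℝ} {s C : ℝ} (hs : 0 < s)
    (hm : AEStronglyMeasurable f (volume.restrict (Set.Ioc 0 s)))
    (hb : ∀ y ∈ Set.Ioc (0:ℝ) s, ‖f y‖ ≤ C / Real.sqrt y) :
    IntegrableOn f (Set.Ioc 0 s) := by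
  have hint : IntegrableOn (fun y : ℝ => C / Real.sqrt y) (Set.Ioc 0 s) := by
    simpa [div_eq_mul_inv, IntegrableOn] using (sqrtInv_integrableOn hs).const_mul C
  exact Integrable.mono' hint hm ((ae_restrict_iff' measurableSet_Ioc).mpr (ae_of_all _ hb))

/-- The conditional density `ψ_T(u)` of the last-passage time prior to `T` of Brownian
motion through the line `a + b t`, given that the first passage occurs before `T`. -/
noncomputable def psi (b T u : ℝ) : ℝ :=
  Real.exp (-b ^ 2 * u / 2) / (Real.pi * Real.sqrt (u * (T - u))) *
    (Real.exp (-b ^ 2 * (T - u) / 2) +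
      b / 2 * Real.sqrt (2 * Real.pi * (T - u)) * (2 * Phi (b * Real.sqrt (T - u)) - 1))

noncomputable def Dpsi (b T y : ℝ) : ℝ :=
  -(Real.exp (-b ^ 2 * T / 2) / (2 * Real.pi * Real.sqrt y * ((T - y) * Real.sqrt (T - y))))

lemma psi_hasDerivAt (b u T : ℝ) (hu : 0 < u) (huT : u < T) :
    HasDerivAt (fun T' => psi b T' u)
      (-(Real.exp (-b ^ 2 * T / 2) /
        (2 * Real.pi * Real.sqrt u * ((T - u) * Real.sqrt (T - u))))) T := by
  have hw : 0 < T - u := sub_pos.mpr huT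
  have huw : 0 < u * (T - u) := mul_pos hu hw
  have h2pi : (0:ℝ) < 2 * Real.pi := by positivity
  have h2piw : 0 < 2 * Real.pi * (T - u) := by positivity
  -- inner derivative of T ↦ T - u
  have hsub : HasDerivAt (fun T' : ℝ => T' - u) 1 T := (hasDerivAt_id T).sub_const u
  -- sqrt (u * (T - u))
  have h1 : HasDerivAt (fun T' : ℝ => u * (T' - u)) u T := by
    simpa using hsub.const_mul u
  have hsq1 : HasDerivAt (fun T' : ℝ => Real.sqrt (u * (T' - u)))
      (u / (2 * Real.sqrt (u * (T - u)))) T := h1.sqrt (ne_of_gt huw)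
  -- F1 = exp(-b²u/2) / (π √(u(T-u)))
  have hF1 : HasDerivAt (fun T' : ℝ => Real.exp (-b ^ 2 * u / 2) / (Real.pi * Real.sqrt (u * (T' - u))))
      ((0 * (Real.pi * Real.sqrt (u * (T - u))) -
        Real.exp (-b ^ 2 * u / 2) * (Real.pi * (u / (2 * Real.sqrt (u * (T - u)))))) /
        (Real.pi * Real.sqrt (u * (T - u))) ^ 2) T := by
    exact (hasDerivAt_const T _).div (hsq1.const_mul Real.pi)
      (by positivity)
  -- e1 = exp(-b²(T-u)/2)
  have hlin : HasDerivAt (fun T' : ℝ => -b ^ 2 * (T' - u) / 2) (-b ^ 2 * 1 / 2) T :=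
    (hsub.const_mul (-b ^ 2)).div_const 2
  have he1 : HasDerivAt (fun T' : ℝ => Real.exp (-b ^ 2 * (T' - u) / 2))
      (Real.exp (-b ^ 2 * (T - u) / 2) * (-b ^ 2 * 1 / 2)) T := hlin.exp
  -- sqrt (2π(T-u))
  have h2 : HasDerivAt (fun T' : ℝ => 2 * Real.pi * (T' - u)) (2 * Real.pi) T := by
    simpa using hsub.const_mul (2 * Real.pi)
  have hsq2 : HasDerivAt (fun T' : ℝ => Real.sqrt (2 * Real.pi * (T' - u)))
      (2 * Real.pi / (2 * Real.sqrt (2 * Real.pi * (T - u)))) T := h2.sqrt (ne_of_gt h2piw)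
  -- sqrt (T - u)
  have hsq3 : HasDerivAt (fun T' : ℝ => Real.sqrt (T' - u)) (1 / (2 * Real.sqrt (T - u))) T :=
    hsub.sqrt (ne_of_gt hw)
  -- b * sqrt (T - u)
  have hbs : HasDerivAt (fun T' : ℝ => b * Real.sqrt (T' - u)) (b * (1 / (2 * Real.sqrt (T - u)))) T :=
    hsq3.const_mul b
  -- Phi (b √(T-u))
  have hPhi : HasDerivAt (fun T' : ℝ => Phi (b * Real.sqrt (T' - u)))
      (Real.exp (-(b * Real.sqrt (T - u)) ^ 2 / 2) / Real.sqrt (2 * Real.pi) *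
        (b * (1 / (2 * Real.sqrt (T - u))))) T :=
    by have := (hasDerivAt_Phi (b * Real.sqrt (T - u))).comp T hbs; exact this
  have hP : HasDerivAt (fun T' : ℝ => 2 * Phi (b * Real.sqrt (T' - u)) - 1)
      (2 * (Real.exp (-(b * Real.sqrt (T - u)) ^ 2 / 2) / Real.sqrt (2 * Real.pi) *
        (b * (1 / (2 * Real.sqrt (T - u)))))) T := by
    simpa using (hPhi.const_mul 2).sub_const 1
  -- F2
  have hF2 := he1.add (((hsq2.const_mul (b / 2)).mul hP))
  have hfull := hF1.mul hF2
  have heq : (fun T' : ℝ => psi b T' u) = fun T' =>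
      Real.exp (-b ^ 2 * u / 2) / (Real.pi * Real.sqrt (u * (T' - u))) *
        (Real.exp (-b ^ 2 * (T' - u) / 2) +
          b / 2 * Real.sqrt (2 * Real.pi * (T' - u)) * (2 * Phi (b * Real.sqrt (T' - u)) - 1)) := by
    funext T'; rfl
  rw [heq]
  refine HasDerivAt.congr_deriv hfull ?_
  simp only [Pi.add_apply, Pi.mul_apply]
  -- algebra
  have hsu : Real.sqrt u ^ 2 = u := Real.sq_sqrt hu.le
  have hsw : Real.sqrt (T - u) ^ 2 = T - u := Real.sq_sqrt hw.le
  have hs2p : Real.sqrt (2 * Real.pi) ^ 2 = 2 * Real.pi := Real.sq_sqrt h2pi.le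
  have hsuw : Real.sqrt (u * (T - u)) = Real.sqrt u * Real.sqrt (T - u) := Real.sqrt_mul hu.le _
  have hs2pw : Real.sqrt (2 * Real.pi * (T - u)) = Real.sqrt (2 * Real.pi) * Real.sqrt (T - u) :=
    Real.sqrt_mul h2pi.le _
  have hePhi : Real.exp (-(b * Real.sqrt (T - u)) ^ 2 / 2) = Real.exp (-b ^ 2 * (T - u) / 2) := by
    congr 1
    rw [mul_pow, hsw]; ring
  have heT : Real.exp (-b ^ 2 * u / 2) * Real.exp (-b ^ 2 * (T - u) / 2)
      = Real.exp (-b ^ 2 * T / 2) := by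
    rw [← Real.exp_add]; congr 1; ring
  have hsupos : 0 < Real.sqrt u := Real.sqrt_pos.mpr hu
  have hswpos : 0 < Real.sqrt (T - u) := Real.sqrt_pos.mpr hw
  have hs2ppos : 0 < Real.sqrt (2 * Real.pi) := Real.sqrt_pos.mpr h2pi
  rw [hsuw, hs2pw, hePhi, ← heT]
  generalize Real.exp (-b ^ 2 * u / 2) = eu
  generalize Real.exp (-b ^ 2 * (T - u) / 2) = ew
  generalize Phi (b * Real.sqrt (T - u)) = P
  generalize hswg : Real.sqrt (T - u) = sw
  generalize hsug : Real.sqrt u = su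
  generalize hspg : Real.sqrt (2 * Real.pi) = sp
  have hsw' : sw ^ 2 = T - u := hswg ▸ hsw
  have hsu' : su ^ 2 = u := hsug ▸ hsu
  have hsp' : sp ^ 2 = 2 * Real.pi := hspg ▸ hs2p
  have hswp : (0:ℝ) < sw := hswg ▸ hswpos
  have hsup : (0:ℝ) < su := hsug ▸ hsupos
  have hspp : (0:ℝ) < sp := hspg ▸ hs2ppos
  have hpi : Real.pi = sp ^ 2 / 2 := by rw [hsp']; ring
  rw [hpi, ← hsw', ← hsu']
  have n1 : su ≠ 0 := ne_of_gt hsup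
  have n2 : sw ≠ 0 := ne_of_gt hswp
  have n3 : sp ≠ 0 := ne_of_gt hspp
  field_simp
  ring

lemma Dpsi_measurable (b T : ℝ) : Measurable (fun y => Dpsi b T y) := by
  apply Measurable.neg
  exact (measurable_const.div
    (((measurable_const.mul Real.continuous_sqrt.measurable)).mul
      (((measurable_const.sub measurable_id).mul
        ((Real.continuous_sqrt.measurable).comp (measurable_const.sub measurable_id))))))

lemma Dpsi_norm_bound {b s r y : ℝ} (hr : 0 < r) (hy : y ∈ Set.Ioc (0:ℝ) s) :
    ‖Dpsi b (s + r) y‖ ≤ Real.exp (-b ^ 2 * (s + r) / 2) / (2 * Real.pi * (r * Real.sqrt r)) /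
      Real.sqrt y := by
  have hy0 : 0 < y := hy.1
  have hw : r ≤ s + r - y := by linarith [hy.2]
  have hw0 : 0 < s + r - y := lt_of_lt_of_le hr hw
  have hsy : 0 < Real.sqrt y := Real.sqrt_pos.mpr hy0
  rw [Dpsi, norm_neg, Real.norm_eq_abs, abs_div, abs_of_pos (Real.exp_pos _),
    abs_of_pos (by positivity)]
  rw [div_div]
  apply div_le_div_of_nonneg_left (Real.exp_pos _).le (by positivity)
  have h1 : r * Real.sqrt r ≤ (s + r - y) * Real.sqrt (s + r - y) :=
    mul_le_mul hw (Real.sqrt_le_sqrt hw) (Real.sqrt_nonneg r) hw0.le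
  calc 2 * Real.pi * (r * Real.sqrt r) * Real.sqrt y
      ≤ 2 * Real.pi * ((s + r - y) * Real.sqrt (s + r - y)) * Real.sqrt y := by gcongr
    _ = 2 * Real.pi * Real.sqrt y * ((s + r - y) * Real.sqrt (s + r - y)) := by ring

lemma Dpsi_integrableOn {b s r : ℝ} (hs : 0 < s) (hr : 0 < r) :
    IntegrableOn (fun y => Dpsi b (s + r) y) (Set.Ioc 0 s) :=
  integrableOn_of_sqrt_bound hs (Dpsi_measurable b (s + r)).aestronglyMeasurable
    (fun y hy => Dpsi_norm_bound hr hy)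

lemma integral_Dpsi (b : ℝ) {s r : ℝ} (hs : 0 < s) (hr : 0 < r) :
    ∫ y in (0:ℝ)..s, Dpsi b (s + r) y
      = -(Real.exp (-b ^ 2 * (s + r) / 2) * Real.sqrt s / (Real.pi * (s + r) * Real.sqrt r)) := by
  set T := s + r with hT
  have hsT : s < T := by simp [hT]; linarith
  set E := Real.exp (-b ^ 2 * T / 2) with hE
  set H : ℝ → ℝ := fun y => -(E / (Real.pi * T)) * (Real.sqrt y / Real.sqrt (T - y)) with hH
  have hTpos : 0 < T := by linarith
  have hcont : ContinuousOn H (Set.Icc 0 s) := by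
    apply ContinuousOn.mul continuousOn_const
    apply ContinuousOn.div (Real.continuous_sqrt.continuousOn)
      ((Real.continuous_sqrt.comp (continuous_const.sub continuous_id)).continuousOn)
    intro y hy
    have h2 : 0 < T - y := by simp only [hT]; have := hy.2; linarith
    exact ne_of_gt (Real.sqrt_pos.mpr h2)
  have hderiv : ∀ y ∈ Set.Ioo 0 s, HasDerivWithinAt H (Dpsi b T y) (Set.Ioi y) y := by
    intro y hy
    have hy0 : 0 < y := hy.1
    have hw0 : 0 < T - y := by have := hy.2; simp only [hT]; linarith
    have h1 : HasDerivAt Real.sqrt (1 / (2 * Real.sqrt y)) y := Real.hasDerivAt_sqrt (ne_of_gt hy0)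
    have hsub : HasDerivAt (fun x : ℝ => T - x) (-1) y := by
      simpa using (hasDerivAt_id y).const_sub T
    have h2 : HasDerivAt (fun x => Real.sqrt (T - x)) (-1 / (2 * Real.sqrt (T - y))) y :=
      hsub.sqrt (ne_of_gt hw0)
    have hsy : 0 < Real.sqrt y := Real.sqrt_pos.mpr hy0
    have hsw : 0 < Real.sqrt (T - y) := Real.sqrt_pos.mpr hw0
    have hdiv := (h1.div h2 (ne_of_gt hsw)).const_mul (-(E / (Real.pi * T)))
    refine HasDerivAt.hasDerivWithinAt ?_
    have heq : H = fun x => -(E / (Real.pi * T)) * (Real.sqrt x / Real.sqrt (T - x)) := rfl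
    rw [heq]
    refine HasDerivAt.congr_deriv hdiv ?_
    rw [Dpsi, ← hE]
    have hsy2 : Real.sqrt y ^ 2 = y := Real.sq_sqrt hy0.le
    have hsw2 : Real.sqrt (T - y) ^ 2 = T - y := Real.sq_sqrt hw0.le
    generalize hg1 : Real.sqrt y = sy at *
    generalize hg2 : Real.sqrt (T - y) = sw at *
    have hTrel : T = sy ^ 2 + sw ^ 2 := by rw [hsy2, hsw2]; ring
    rw [← hsw2, hTrel]
    have n1 : sy ≠ 0 := ne_of_gt hsy
    have n2 : sw ≠ 0 := ne_of_gt hsw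
    field_simp
    ring
  have hint : IntervalIntegrable (fun y => Dpsi b T y) volume 0 s := by
    rw [intervalIntegrable_iff_integrableOn_Ioc_of_le hs.le]
    exact Dpsi_integrableOn hs hr
  have := intervalIntegral.integral_eq_sub_of_hasDeriv_right_of_le hs.le hcont hderiv hint
  rw [this]
  have hH0 : H 0 = 0 := by simp [hH]
  have hHs : H s = -(E * Real.sqrt s / (Real.pi * T * Real.sqrt r)) := by
    have : T - s = r := by simp [hT]
    rw [hH]; simp only [this]
    field_simp
  rw [hH0, hHs, sub_zero]

lemma psi_second_continuous (b T : ℝ) :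
    Continuous (fun y : ℝ => Real.exp (-b ^ 2 * (T - y) / 2) +
      b / 2 * Real.sqrt (2 * Real.pi * (T - y)) * (2 * Phi (b * Real.sqrt (T - y)) - 1)) := by
  have hc : Continuous (fun y : ℝ => b * Real.sqrt (T - y)) := by fun_prop
  have h1 : Continuous (fun y : ℝ => Real.exp (-b ^ 2 * (T - y) / 2)) := by fun_prop
  have h2 : Continuous (fun y : ℝ => b / 2 * Real.sqrt (2 * Real.pi * (T - y))) := by fun_prop
  exact h1.add (h2.mul ((continuous_const.mul (Phi_continuous.comp hc)).sub continuous_const))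

lemma psi_contOn {b s T : ℝ} (hT : s < T) :
    ContinuousOn (fun y => psi b T y) (Set.Ioc 0 s) := by
  apply ContinuousOn.mul _ (psi_second_continuous b T).continuousOn
  apply ContinuousOn.div (by fun_prop) (by fun_prop)
  intro y hy
  have h1 : 0 < y * (T - y) := mul_pos hy.1 (by linarith [hy.2])
  have := Real.sqrt_pos.mpr h1
  positivity

lemma psi_integrableOn (b : ℝ) {s T : ℝ} (hs : 0 < s) (hT : s < T) :
    IntegrableOn (fun y => psi b T y) (Set.Ioc 0 s) := by
  have hTs : 0 < T - s := by linarith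
  refine integrableOn_of_sqrt_bound (C := (1 + |b| / 2 * Real.sqrt (2 * Real.pi * T)) /
    (Real.pi * Real.sqrt (T - s))) hs
    ((psi_contOn hT).aestronglyMeasurable measurableSet_Ioc) (fun y hy => ?_)
  have hy0 : 0 < y := hy.1
  have hTy : 0 < T - y := by linarith [hy.2]
  have hsy : 0 < Real.sqrt y := Real.sqrt_pos.mpr hy0
  have hsTs : 0 < Real.sqrt (T - s) := Real.sqrt_pos.mpr hTs
  have e1 : Real.exp (-b ^ 2 * y / 2) ≤ 1 := by
    rw [Real.exp_le_one_iff]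
    nlinarith [sq_nonneg b]
  have habs2 : |2 * Phi (b * Real.sqrt (T - y)) - 1| ≤ 1 := by
    rw [abs_le]
    constructor <;> [linarith [Phi_nonneg (b * Real.sqrt (T - y))];
      linarith [Phi_le_one (b * Real.sqrt (T - y))]]
  have hsqrtprod : Real.sqrt y * Real.sqrt (T - s) ≤ Real.sqrt (y * (T - y)) := by
    rw [Real.sqrt_mul hy0.le]
    gcongr
    linarith [hy.2]
  have hfirst : Real.exp (-b ^ 2 * y / 2) / (Real.pi * Real.sqrt (y * (T - y)))
      ≤ 1 / (Real.pi * (Real.sqrt y * Real.sqrt (T - s))) := by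
    apply div_le_div₀ zero_le_one e1 (by positivity)
    gcongr
  have h2a : |Real.exp (-b ^ 2 * (T - y) / 2)| ≤ 1 := by
    rw [abs_of_pos (Real.exp_pos _), Real.exp_le_one_iff]
    nlinarith [sq_nonneg b]
  have h2b : |b / 2 * Real.sqrt (2 * Real.pi * (T - y))| ≤ |b| / 2 * Real.sqrt (2 * Real.pi * T) := by
    rw [abs_mul, abs_div, abs_two, abs_of_nonneg (Real.sqrt_nonneg _)]
    have hle : Real.sqrt (2 * Real.pi * (T - y)) ≤ Real.sqrt (2 * Real.pi * T) :=
      Real.sqrt_le_sqrt (by nlinarith [Real.pi_pos])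
    exact mul_le_mul_of_nonneg_left hle (by positivity)
  have hsecond : ‖Real.exp (-b ^ 2 * (T - y) / 2) +
      b / 2 * Real.sqrt (2 * Real.pi * (T - y)) * (2 * Phi (b * Real.sqrt (T - y)) - 1)‖
      ≤ 1 + |b| / 2 * Real.sqrt (2 * Real.pi * T) := by
    rw [Real.norm_eq_abs]
    calc |Real.exp (-b ^ 2 * (T - y) / 2) +
        b / 2 * Real.sqrt (2 * Real.pi * (T - y)) * (2 * Phi (b * Real.sqrt (T - y)) - 1)|
        ≤ |Real.exp (-b ^ 2 * (T - y) / 2)| +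
          |b / 2 * Real.sqrt (2 * Real.pi * (T - y))| * |2 * Phi (b * Real.sqrt (T - y)) - 1| :=
          (abs_add_le _ _).trans (by rw [abs_mul])
      _ ≤ 1 + (|b| / 2 * Real.sqrt (2 * Real.pi * T)) * 1 :=
          add_le_add h2a (mul_le_mul h2b habs2 (abs_nonneg _) (by positivity))
      _ = 1 + |b| / 2 * Real.sqrt (2 * Real.pi * T) := by ring
  rw [psi, norm_mul]
  calc ‖Real.exp (-b ^ 2 * y / 2) / (Real.pi * Real.sqrt (y * (T - y)))‖ *
      ‖Real.exp (-b ^ 2 * (T - y) / 2) +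
        b / 2 * Real.sqrt (2 * Real.pi * (T - y)) * (2 * Phi (b * Real.sqrt (T - y)) - 1)‖
      ≤ (1 / (Real.pi * (Real.sqrt y * Real.sqrt (T - s)))) *
        (1 + |b| / 2 * Real.sqrt (2 * Real.pi * T)) := by
        apply mul_le_mul _ hsecond (norm_nonneg _) (by positivity)
        rw [Real.norm_eq_abs, abs_of_pos (by positivity)]
        exact hfirst
    _ = (1 + |b| / 2 * Real.sqrt (2 * Real.pi * T)) / (Real.pi * Real.sqrt (T - s)) /
        Real.sqrt y := by
        generalize (1 + |b| / 2 * Real.sqrt (2 * Real.pi * T)) = K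
        have n1 : Real.sqrt y ≠ 0 := ne_of_gt hsy
        have n2 : Real.sqrt (T - s) ≠ 0 := ne_of_gt hsTs
        field_simp

/-- for `b ≤ 0` and `s > 0`, the function `t ↦ ∫_0^s ψ_{s+t}(y) dy` is
differentiable on `(0, ∞)` with derivative `-e^{-b²(s+t)/2} √s / (π (s+t) √t)`. -/
theorem stmt_2 (b s : ℝ) (hb : b ≤ 0) (hs : 0 < s) :
    ∀ t : ℝ, 0 < t →
      HasDerivAt (fun r : ℝ => ∫ y in (0:ℝ)..s, psi b (s + r) y)
        (-(Real.exp (-b ^ 2 * (s + t) / 2) * Real.sqrt s /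
            (Real.pi * (s + t) * Real.sqrt t))) t := by
  intro t ht
  set t₀ := t / 2 with ht₀def
  have ht₀ : 0 < t₀ := by positivity
  have ht₀t : t₀ < t := by simp only [ht₀def]; linarith
  set g : ℝ → ℝ := fun r =>
    -(Real.exp (-b ^ 2 * (s + r) / 2) * Real.sqrt s / (Real.pi * (s + r) * Real.sqrt r)) with hg
  -- continuity of g on Ioi 0
  have hgcont : ContinuousOn g (Set.Ioi 0) := by
    apply ContinuousOn.neg
    apply ContinuousOn.div (by fun_prop) (by fun_prop)
    intro r hr
    have hr0 : (0:ℝ) < r := hr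
    have h1 : 0 < Real.sqrt r := Real.sqrt_pos.mpr hr0
    have h2 : 0 < s + r := by linarith
    positivity
  -- the key identity on Ioi t₀
  have key : ∀ t' ∈ Set.Ioi t₀, (∫ y in (0:ℝ)..s, psi b (s + t') y)
      = (∫ y in (0:ℝ)..s, psi b (s + t₀) y) + ∫ r in t₀..t', g r := by
    intro t' ht'
    have ht'0 : t₀ < t' := ht'
    have ht'pos : 0 < t' := lt_trans ht₀ ht'0
    have h₁ : t₀ ≤ t' := le_of_lt ht'0
    have hi1 : IntegrableOn (fun y => psi b (s + t') y) (Set.Ioc 0 s) :=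
      psi_integrableOn b hs (by linarith)
    have hi0 : IntegrableOn (fun y => psi b (s + t₀) y) (Set.Ioc 0 s) :=
      psi_integrableOn b hs (by linarith)
    -- pointwise FTC in the r variable
    have hptwise : ∀ y ∈ Set.Ioc (0:ℝ) s,
        psi b (s + t') y - psi b (s + t₀) y = ∫ r in Set.Ioc t₀ t', Dpsi b (s + r) y := by
      intro y hy
      have hderiv : ∀ r ∈ Set.uIcc t₀ t', HasDerivAt (fun r => psi b (s + r) y)
          (Dpsi b (s + r) y) r := by
        intro r hr
        rw [Set.uIcc_of_le h₁] at hr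
        have hrpos : 0 < r := lt_of_lt_of_le ht₀ hr.1
        have h := (psi_hasDerivAt b y (s + r) hy.1 (by linarith [hy.2])).comp r
          ((hasDerivAt_id r).const_add s)
        simpa [Dpsi, Function.comp_def] using h
      have hint : IntervalIntegrable (fun r => Dpsi b (s + r) y) volume t₀ t' := by
        apply ContinuousOn.intervalIntegrable
        rw [Set.uIcc_of_le h₁]
        apply ContinuousOn.neg
        apply ContinuousOn.div (by fun_prop) (by fun_prop)
        intro r hr
        have hrpos : 0 < r := lt_of_lt_of_le ht₀ hr.1
        have hw : 0 < s + r - y := by linarith [hy.2]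
        have h1 : 0 < Real.sqrt y := Real.sqrt_pos.mpr hy.1
        have h2 : 0 < Real.sqrt (s + r - y) := Real.sqrt_pos.mpr hw
        positivity
      have := intervalIntegral.integral_eq_sub_of_hasDerivAt hderiv hint
      rw [intervalIntegral.integral_of_le h₁] at this
      linarith [this]
    -- rewrite interval integrals as set integrals
    rw [intervalIntegral.integral_of_le hs.le, intervalIntegral.integral_of_le hs.le,
      intervalIntegral.integral_of_le h₁]
    have hsub : (∫ y in Set.Ioc (0:ℝ) s, psi b (s + t') y)
        - (∫ y in Set.Ioc (0:ℝ) s, psi b (s + t₀) y)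
        = ∫ y in Set.Ioc (0:ℝ) s, (psi b (s + t') y - psi b (s + t₀) y) :=
      (integral_sub hi1 hi0).symm
    have hstep : ∫ y in Set.Ioc (0:ℝ) s, (psi b (s + t') y - psi b (s + t₀) y)
        = ∫ y in Set.Ioc (0:ℝ) s, ∫ r in Set.Ioc t₀ t', Dpsi b (s + r) y :=
      setIntegral_congr_fun measurableSet_Ioc hptwise
    -- Fubini
    have hprodint : Integrable (Function.uncurry fun y r => Dpsi b (s + r) y)
        ((volume.restrict (Set.Ioc (0:ℝ) s)).prod (volume.restrict (Set.Ioc t₀ t'))) := by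
      rw [Measure.prod_restrict]
      have hmeas : AEStronglyMeasurable (Function.uncurry fun y r => Dpsi b (s + r) y)
          (volume.restrict (Set.Ioc (0:ℝ) s ×ˢ Set.Ioc t₀ t')) := by
        apply Measurable.aestronglyMeasurable
        apply Measurable.neg
        apply Measurable.div
        · fun_prop
        · fun_prop
      have hboundint : Integrable
          (fun p : ℝ × ℝ => (1 / (2 * Real.pi * (t₀ * Real.sqrt t₀))) / Real.sqrt p.1)
          ((volume.restrict (Set.Ioc (0:ℝ) s)).prod (volume.restrict (Set.Ioc t₀ t'))) := by
        have h1 : Integrable (fun y : ℝ => (1 / (2 * Real.pi * (t₀ * Real.sqrt t₀))) / Real.sqrt y)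
            (volume.restrict (Set.Ioc (0:ℝ) s)) := by
          simpa [mul_one_div, div_div_eq_mul_div, one_div, div_eq_mul_inv] using
            (sqrtInv_integrableOn hs).const_mul (1 / (2 * Real.pi * (t₀ * Real.sqrt t₀)))
        have h2 : Integrable (fun _ : ℝ => (1:ℝ)) (volume.restrict (Set.Ioc t₀ t')) :=
          integrableOn_const measure_Ioc_lt_top.ne
        simpa using h1.mul_prod h2
      rw [Measure.prod_restrict] at hboundint
      apply Integrable.mono' hboundint hmeas
      rw [ae_restrict_iff' (measurableSet_Ioc.prod measurableSet_Ioc)]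
      apply ae_of_all
      rintro ⟨y, r⟩ ⟨hy, hr⟩
      have hrpos : 0 < r := lt_trans ht₀ hr.1
      calc ‖Function.uncurry (fun y r => Dpsi b (s + r) y) (y, r)‖
          ≤ Real.exp (-b ^ 2 * (s + r) / 2) / (2 * Real.pi * (r * Real.sqrt r)) / Real.sqrt y :=
            Dpsi_norm_bound hrpos hy
        _ ≤ (1 / (2 * Real.pi * (t₀ * Real.sqrt t₀))) / Real.sqrt y := by
            have hxy : 0 < Real.sqrt y := Real.sqrt_pos.mpr hy.1
            have hnum : Real.exp (-b ^ 2 * (s + r) / 2) / (2 * Real.pi * (r * Real.sqrt r))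
                ≤ 1 / (2 * Real.pi * (t₀ * Real.sqrt t₀)) := by
              apply div_le_div₀ zero_le_one
                (by rw [Real.exp_le_one_iff]; nlinarith [sq_nonneg b, hs.le, hrpos.le])
                (by positivity)
              have h1 := hr.1.le
              have h2 := Real.sqrt_le_sqrt hr.1.le
              gcongr
            gcongr
    have hswap : (∫ y in Set.Ioc (0:ℝ) s, ∫ r in Set.Ioc t₀ t', Dpsi b (s + r) y)
        = ∫ r in Set.Ioc t₀ t', ∫ y in Set.Ioc (0:ℝ) s, Dpsi b (s + r) y :=
      integral_integral_swap hprodint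
    have hinner : ∀ r ∈ Set.Ioc t₀ t',
        (∫ y in Set.Ioc (0:ℝ) s, Dpsi b (s + r) y) = g r := by
      intro r hr
      have hrpos : 0 < r := lt_trans ht₀ hr.1
      rw [← intervalIntegral.integral_of_le hs.le, integral_Dpsi b hs hrpos]
    have hlast : (∫ r in Set.Ioc t₀ t', ∫ y in Set.Ioc (0:ℝ) s, Dpsi b (s + r) y)
        = ∫ r in Set.Ioc t₀ t', g r :=
      setIntegral_congr_fun measurableSet_Ioc hinner
    linarith [hsub, hstep, hswap, hlast]
  -- conclude with FTC derivative at t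
  have hintg : IntervalIntegrable g volume t₀ t := by
    apply ContinuousOn.intervalIntegrable
    apply hgcont.mono
    rw [Set.uIcc_of_le ht₀t.le]
    intro x hx
    exact lt_of_lt_of_le ht₀ hx.1
  have hd : HasDerivAt (fun t' => (∫ y in (0:ℝ)..s, psi b (s + t₀) y) + ∫ r in t₀..t', g r)
      (g t) t := by
    apply HasDerivAt.const_add
    exact intervalIntegral.integral_hasDerivAt_right hintg
      (ContinuousOn.stronglyMeasurableAtFilter isOpen_Ioi hgcont t ht)
      (hgcont.continuousAt (isOpen_Ioi.mem_nhds ht))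
  have heq : (fun r : ℝ => ∫ y in (0:ℝ)..s, psi b (s + r) y)
      =ᶠ[nhds t] (fun t' => (∫ y in (0:ℝ)..s, psi b (s + t₀) y) + ∫ r in t₀..t', g r) := by
    filter_upwards [isOpen_Ioi.mem_nhds ht₀t] with x hx
    exact key x hx
  exact (hd.congr_of_eventuallyEq heq)
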